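/- Let X be a complete separable metric space and let P be a Markov transition kernel on X which is Feller, i.e. for every bounded continuous function f : X → ℝ the map x ↦ ∫ f(y) P(x,dy) is continuous. Suppose P admits a Lyapunov function, i.e. a Borel measurable function V : X → [0,∞] such that (i) V(x) < ∞ for at least one x, (ii) for every c ∈ [0,∞) the sublevel set {x : V(x) ≤ c} is compact, and (iii) there exist constants 0 ≤ γ < 1 and C ≥ 0 such that ∫ V(y) P(x,dy) ≤ γ·V(x) + C for every x with V(x) < ∞. Then P admits an invariant probability measure, i.e. a probability measure π on X with π(A) = ∫ P(x,A) π(dx) for every Borel set A. -/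

import Mathlib

open MeasureTheory ProbabilityTheory Filter Topology Set TopologicalSpace
open scoped NNReal ENNReal BoundedContinuousFunction

namespace KBAux

lemma stair_low_pt (δ t : ℝ≥0) (m : ℕ) :
    (∑ i ∈ Finset.Icc 1 m, if ((i : ℝ≥0) * δ ≤ t) then (δ : ℝ≥0∞) else 0) ≤ (t : ℝ≥0∞) := by
  induction m with
  | zero => simp
  | succ m ih =>
    rw [Finset.sum_Icc_succ_top (Nat.succ_le_succ (Nat.zero_le m))]
    by_cases h : ((m + 1 : ℕ) : ℝ≥0) * δ ≤ t
    · have hall : ∀ i ∈ Finset.Icc 1 (m + 1), (if ((i : ℝ≥0) * δ ≤ t) then (δ : ℝ≥0∞) else 0)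
          = (δ : ℝ≥0∞) := by
        intro i hi
        rw [if_pos]
        refine le_trans (mul_le_mul_left ?_ δ) h
        exact_mod_cast (Finset.mem_Icc.mp hi).2
      rw [← Finset.sum_Icc_succ_top (Nat.succ_le_succ (Nat.zero_le m)), Finset.sum_congr rfl hall,
        Finset.sum_const, Nat.card_Icc]
      simp only [Nat.add_sub_cancel, nsmul_eq_mul]
      calc ((m + 1 : ℕ) : ℝ≥0∞) * (δ : ℝ≥0∞) = (((m + 1 : ℕ) : ℝ≥0) * δ : ℝ≥0) := by push_cast; ring
      _ ≤ (t : ℝ≥0∞) := by exact_mod_cast h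
    · rw [if_neg (by exact_mod_cast h), add_zero]
      exact ih

lemma stair_up_pt (δ t : ℝ≥0) (m : ℕ) (ht : t ≤ (m : ℝ≥0) * δ) :
    (t : ℝ≥0∞) ≤ (δ : ℝ≥0∞) + ∑ i ∈ Finset.Icc 1 m, if ((i : ℝ≥0) * δ < t) then (δ : ℝ≥0∞) else 0 := by
  induction m with
  | zero =>
    simp only [Nat.cast_zero, zero_mul, le_zero_iff] at ht
    simp [ht]
  | succ m ih =>
    by_cases h : t ≤ (m : ℝ≥0) * δ
    · refine (ih h).trans (add_le_add_right ?_ _)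
      exact Finset.sum_le_sum_of_subset (Finset.Icc_subset_Icc_right (Nat.le_succ m))
    · push_neg at h
      have hall : ∀ i ∈ Finset.Icc 1 m, (if ((i : ℝ≥0) * δ < t) then (δ : ℝ≥0∞) else 0)
          = (δ : ℝ≥0∞) := by
        intro i hi
        rw [if_pos]
        refine lt_of_le_of_lt (mul_le_mul_left ?_ δ) h
        exact_mod_cast (Finset.mem_Icc.mp hi).2
      have hsub : ∑ i ∈ Finset.Icc 1 m, (if ((i : ℝ≥0) * δ < t) then (δ : ℝ≥0∞) else 0)
          ≤ ∑ i ∈ Finset.Icc 1 (m + 1), if ((i : ℝ≥0) * δ < t) then (δ : ℝ≥0∞) else 0 :=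
        Finset.sum_le_sum_of_subset (Finset.Icc_subset_Icc_right (Nat.le_succ m))
      have hm : ((m : ℝ≥0∞)) * δ = ∑ i ∈ Finset.Icc 1 m, (if ((i : ℝ≥0) * δ < t) then (δ : ℝ≥0∞) else 0) := by
        rw [Finset.sum_congr rfl hall, Finset.sum_const, Nat.card_Icc]
        simp [nsmul_eq_mul]
      calc (t : ℝ≥0∞) ≤ (((m + 1 : ℕ) : ℝ≥0) * δ : ℝ≥0) := by exact_mod_cast ht
      _ = (δ : ℝ≥0∞) + (m : ℝ≥0∞) * δ := by push_cast; ring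
      _ ≤ _ := add_le_add_right (hm ▸ hsub) _

variable {X : Type*} [MetricSpace X] [MeasurableSpace X] [BorelSpace X]

lemma stair_le_lintegral (ν : Measure X) (g : X →ᵇ ℝ≥0) (δ : ℝ≥0) (m : ℕ) :
    ∑ i ∈ Finset.Icc 1 m, (δ : ℝ≥0∞) * ν {y | (i : ℝ≥0) * δ ≤ g y} ≤ ∫⁻ x, (g x : ℝ≥0∞) ∂ν := by
  have hmeas : ∀ i : ℕ, MeasurableSet {y : X | (i : ℝ≥0) * δ ≤ g y} := fun i =>
    (isClosed_le continuous_const g.continuous).measurableSet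
  calc ∑ i ∈ Finset.Icc 1 m, (δ : ℝ≥0∞) * ν {y | (i : ℝ≥0) * δ ≤ g y}
      = ∫⁻ x, ∑ i ∈ Finset.Icc 1 m,
          Set.indicator {y : X | (i : ℝ≥0) * δ ≤ g y} (fun _ => (δ : ℝ≥0∞)) x ∂ν := by
        rw [lintegral_finset_sum _ (fun i _ => measurable_const.indicator (hmeas i))]
        exact Finset.sum_congr rfl fun i _ => (lintegral_indicator_const (hmeas i) _).symm
    _ ≤ ∫⁻ x, (g x : ℝ≥0∞) ∂ν := by
        refine lintegral_mono fun x => ?_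
        have := stair_low_pt δ (g x) m
        refine le_trans (le_of_eq (Finset.sum_congr rfl fun i _ => ?_)) this
        simp [Set.indicator_apply]

lemma lintegral_le_stair (ν : Measure X) [IsProbabilityMeasure ν] (g : X →ᵇ ℝ≥0) (δ : ℝ≥0)
    (m : ℕ) (hm : ∀ x, g x ≤ (m : ℝ≥0) * δ) :
    ∫⁻ x, (g x : ℝ≥0∞) ∂ν
      ≤ (δ : ℝ≥0∞) + ∑ i ∈ Finset.Icc 1 m, (δ : ℝ≥0∞) * ν {y | (i : ℝ≥0) * δ < g y} := by
  have hmeas : ∀ i : ℕ, MeasurableSet {y : X | (i : ℝ≥0) * δ < g y} := fun i =>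
    (isOpen_lt continuous_const g.continuous).measurableSet
  calc ∫⁻ x, (g x : ℝ≥0∞) ∂ν
      ≤ ∫⁻ x, ((δ : ℝ≥0∞) + ∑ i ∈ Finset.Icc 1 m,
          Set.indicator {y : X | (i : ℝ≥0) * δ < g y} (fun _ => (δ : ℝ≥0∞)) x) ∂ν := by
        refine lintegral_mono fun x => ?_
        have := stair_up_pt δ (g x) m (hm x)
        refine le_trans this (le_of_eq ?_)
        refine congrArg (fun z => (δ : ℝ≥0∞) + z) (Finset.sum_congr rfl fun i _ => ?_)
        simp [Set.indicator_apply]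
    _ = (δ : ℝ≥0∞) + ∑ i ∈ Finset.Icc 1 m, (δ : ℝ≥0∞) * ν {y | (i : ℝ≥0) * δ < g y} := by
        rw [lintegral_add_left measurable_const,
          lintegral_finset_sum _ (fun i _ => measurable_const.indicator (hmeas i))]
        simp only [lintegral_const, measure_univ, mul_one]
        exact congrArg (fun z => (δ : ℝ≥0∞) + z)
          (Finset.sum_congr rfl fun i _ => lintegral_indicator_const (hmeas i) _)


theorem exists_limit_measure (μ : ℕ → Measure X) (hprob : ∀ n, IsProbabilityMeasure (μ n))
    (𝒰 : Ultrafilter ℕ)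
    (htight : ∀ ε : ℝ≥0, 0 < ε → ∃ K : Set X, IsCompact K ∧ ∀ n, μ n Kᶜ ≤ (ε : ℝ≥0∞)) :
    ∃ π : Measure X, IsProbabilityMeasure π ∧
      ∀ g : X →ᵇ ℝ≥0,
        Tendsto (fun n => ∫⁻ x, (g x : ℝ≥0∞) ∂μ n) ↑𝒰 (𝓝 (∫⁻ x, (g x : ℝ≥0∞) ∂π)) := by
  classical
  haveI := hprob
  -- limits along the ultrafilter
  set Lim : (ℕ → ℝ≥0∞) → ℝ≥0∞ := fun a => (𝒰.map a).lim with hLimdef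
  have hLim : ∀ a : ℕ → ℝ≥0∞, Tendsto a ↑𝒰 (𝓝 (Lim a)) := by
    intro a
    rw [Filter.Tendsto, ← Ultrafilter.coe_map]
    exact Ultrafilter.le_nhds_lim _
  have hle1 : ∀ s : Set X, Lim (fun n => μ n s) ≤ 1 :=
    fun s => le_of_tendsto (hLim _) (Eventually.of_forall fun n => prob_le_one)
  have hne_top : ∀ s : Set X, Lim (fun n => μ n s) ≠ ⊤ :=
    fun s => ((hle1 s).trans_lt ENNReal.one_lt_top).ne
  -- the content
  set lam : Content X :=
    { toFun := fun K => (Lim (fun n => μ n K)).toNNReal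
      mono' := fun K₁ K₂ h => by
        refine ENNReal.toNNReal_mono (hne_top _) ?_
        exact le_of_tendsto_of_tendsto' (hLim _) (hLim _) fun n => measure_mono h
      sup_disjoint' := fun K₁ K₂ hd _ h₂ => by
        have hadd : Lim (fun n => μ n (↑(K₁ ⊔ K₂) : Set X))
            = Lim (fun n => μ n (↑K₁ : Set X)) + Lim (fun n => μ n (↑K₂ : Set X)) := by
          refine tendsto_nhds_unique (hLim (fun n => μ n (↑(K₁ ⊔ K₂) : Set X))) ?_
          have hth : (fun n => μ n (↑(K₁ ⊔ K₂) : Set X))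
              = fun n => μ n (↑K₁ : Set X) + μ n (↑K₂ : Set X) := by
            funext n
            rw [Compacts.coe_sup]
            exact measure_union hd h₂.measurableSet
          rw [hth]
          exact (hLim _).add (hLim _)
        rw [hadd, ENNReal.toNNReal_add (hne_top _) (hne_top _)]
      sup_le' := fun K₁ K₂ => by
        have h : Lim (fun n => μ n (↑(K₁ ⊔ K₂) : Set X))
            ≤ Lim (fun n => μ n (↑K₁ : Set X)) + Lim (fun n => μ n (↑K₂ : Set X)) := by
          refine le_of_tendsto_of_tendsto' (hLim _) ((hLim _).add (hLim _)) fun n => ?_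
          rw [Compacts.coe_sup]
          exact measure_union_le _ _
        have h2 := ENNReal.toNNReal_mono
          (ENNReal.add_ne_top.2 ⟨hne_top (↑K₁ : Set X), hne_top (↑K₂ : Set X)⟩) h
        rw [ENNReal.toNNReal_add (hne_top (↑K₁ : Set X)) (hne_top (↑K₂ : Set X))] at h2
        exact h2 } with hlamdef
  have hlamcoe : ∀ K : Compacts X, (lam K : ℝ≥0∞) = Lim (fun n => μ n K) := fun K =>
    ENNReal.coe_toNNReal (hne_top _)
  set π : Measure X := lam.measure with hπdef
  have hπapp : ∀ {s : Set X}, MeasurableSet s → π s = lam.outerMeasure s :=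
    fun hs => Content.measure_apply lam hs
  -- open sets: π U ≤ Lim (μ n U)
  have hopen : ∀ U : Set X, IsOpen U → π U ≤ Lim (fun n => μ n U) := by
    intro U hU
    rw [hπapp hU.measurableSet, lam.outerMeasure_of_isOpen U hU]
    refine iSup₂_le fun K hK => ?_
    rw [hlamcoe K]
    exact le_of_tendsto_of_tendsto' (hLim _) (hLim _) fun n => measure_mono hK
  -- lam of compacts is below π
  have hcpt : ∀ K : Compacts X, Lim (fun n => μ n K) ≤ π K := by
    intro K
    rw [← hlamcoe K, hπapp K.isCompact.isClosed.measurableSet]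
    exact lam.le_outerMeasure_compacts K
  -- π is a probability measure
  have hπuniv : π univ = 1 := by
    refine le_antisymm ?_ ?_
    · rw [hπapp MeasurableSet.univ, lam.outerMeasure_of_isOpen univ isOpen_univ]
      refine iSup₂_le fun K _ => ?_
      rw [hlamcoe K]
      exact hle1 _
    · refine ENNReal.le_of_forall_pos_le_add fun ε hε _ => ?_
      obtain ⟨K, hK, hKtight⟩ := htight ε hε
      have h1 : ∀ n, (1 : ℝ≥0∞) ≤ μ n K + (ε : ℝ≥0∞) := by
        intro n
        calc (1 : ℝ≥0∞) = μ n univ := (measure_univ).symm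
        _ ≤ μ n K + μ n Kᶜ := by
            rw [← Set.union_compl_self K]; exact measure_union_le _ _
        _ ≤ μ n K + ε := add_le_add_right (hKtight n) _
      have h2 : (1 : ℝ≥0∞) ≤ Lim (fun n => μ n K) + ε :=
        le_of_tendsto_of_tendsto' (tendsto_const_nhds) ((hLim _).add tendsto_const_nhds) h1
      refine h2.trans (add_le_add_left ?_ _)
      exact (hcpt ⟨K, hK⟩).trans (measure_mono (subset_univ _))
  haveI hπprob : IsProbabilityMeasure π := ⟨hπuniv⟩
  -- closed sets: Lim (μ n F) ≤ π F
  have hclosed : ∀ F : Set X, IsClosed F → Lim (fun n => μ n F) ≤ π F := by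
    intro F hF
    refine ENNReal.le_of_forall_pos_le_add fun ε hε _ => ?_
    obtain ⟨K, hK, hKtight⟩ := htight ε hε
    have h1 : ∀ n, μ n F ≤ μ n (F ∩ K) + (ε : ℝ≥0∞) := by
      intro n
      refine (measure_le_inter_add_diff (μ n) F K).trans (add_le_add_right ?_ _)
      exact (measure_mono (fun x hx => hx.2)).trans (hKtight n)
    have h2 : Lim (fun n => μ n F) ≤ Lim (fun n => μ n (F ∩ K)) + ε :=
      le_of_tendsto_of_tendsto' (hLim _) ((hLim _).add tendsto_const_nhds) h1
    refine h2.trans (add_le_add_left ?_ _)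
    exact (hcpt ⟨F ∩ K, hK.inter_left hF⟩).trans (measure_mono Set.inter_subset_left)
  -- the main convergence statement
  refine ⟨π, hπprob, fun g => ?_⟩
  set q : ℕ → ℝ≥0∞ := fun n => ∫⁻ x, (g x : ℝ≥0∞) ∂μ n with hqdef
  have hqbd : ∀ n, q n ≤ (nndist 0 g : ℝ≥0∞) := by
    intro n
    refine (BoundedContinuousFunction.lintegral_le_edist_mul g (μ := μ n)).trans ?_
    rw [measure_univ, mul_one, edist_nndist]
  suffices h : Lim q = ∫⁻ x, (g x : ℝ≥0∞) ∂π by rw [← h]; exact hLim q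
  have hLimq_ne : Lim q ≠ ⊤ :=
    ((le_of_tendsto (hLim q) (Eventually.of_forall hqbd)).trans_lt ENNReal.coe_lt_top).ne
  -- choice of m for each δ
  have hmδ : ∀ δ : ℝ≥0, 0 < δ → ∀ x, g x ≤ ((⌈(nndist 0 g) / δ⌉₊ : ℝ≥0)) * δ := by
    intro δ hδ x
    refine (g.apply_le_nndist_zero x).trans ?_
    rw [← div_le_iff₀ hδ]
    exact Nat.le_ceil _
  refine le_antisymm ?_ ?_
  · -- Lim q ≤ ∫⁻ g dπ
    refine ENNReal.le_of_forall_pos_le_add fun δ hδ _ => ?_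
    set m := ⌈(nndist 0 g) / δ⌉₊
    have key : ∀ n, q n ≤ (δ : ℝ≥0∞)
        + ∑ i ∈ Finset.Icc 1 m, (δ : ℝ≥0∞) * μ n {y | (i : ℝ≥0) * δ ≤ g y} := by
      intro n
      refine (lintegral_le_stair (μ n) g δ m (hmδ δ hδ)).trans (add_le_add_right ?_ _)
      refine Finset.sum_le_sum fun i _ =>
        mul_le_mul_right (measure_mono (Set.setOf_subset_setOf.mpr fun y hy => le_of_lt hy)) _
    have hTsum : Tendsto (fun n => (δ : ℝ≥0∞)
        + ∑ i ∈ Finset.Icc 1 m, (δ : ℝ≥0∞) * μ n {y | (i : ℝ≥0) * δ ≤ g y}) ↑𝒰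
        (𝓝 ((δ : ℝ≥0∞) + ∑ i ∈ Finset.Icc 1 m,
          (δ : ℝ≥0∞) * Lim (fun n => μ n {y | (i : ℝ≥0) * δ ≤ g y}))) := by
      refine tendsto_const_nhds.add (tendsto_finset_sum _ fun i _ => ?_)
      exact ENNReal.Tendsto.const_mul (hLim _) (Or.inr ENNReal.coe_ne_top)
    have h1 : Lim q ≤ (δ : ℝ≥0∞) + ∑ i ∈ Finset.Icc 1 m,
        (δ : ℝ≥0∞) * Lim (fun n => μ n {y | (i : ℝ≥0) * δ ≤ g y}) :=
      le_of_tendsto_of_tendsto' (hLim q) hTsum key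
    refine h1.trans ?_
    rw [add_comm ((∫⁻ x, (g x : ℝ≥0∞) ∂π)) (δ : ℝ≥0∞)]
    refine add_le_add_right ?_ _
    refine le_trans ?_ (stair_le_lintegral π g δ m)
    refine Finset.sum_le_sum fun i _ => mul_le_mul_right ?_ _
    exact hclosed _ (isClosed_le continuous_const g.continuous)
  · -- ∫⁻ g dπ ≤ Lim q
    refine ENNReal.le_of_forall_pos_le_add fun δ hδ _ => ?_
    set m := ⌈(nndist 0 g) / δ⌉₊
    have h1 : ∫⁻ x, (g x : ℝ≥0∞) ∂π ≤ (δ : ℝ≥0∞)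
        + ∑ i ∈ Finset.Icc 1 m, (δ : ℝ≥0∞) * Lim (fun n => μ n {y | (i : ℝ≥0) * δ < g y}) := by
      refine (lintegral_le_stair π g δ m (hmδ δ hδ)).trans (add_le_add_right ?_ _)
      refine Finset.sum_le_sum fun i _ => mul_le_mul_right ?_ _
      exact hopen _ (isOpen_lt continuous_const g.continuous)
    refine h1.trans ?_
    rw [add_comm (Lim q) (δ : ℝ≥0∞)]
    refine add_le_add_right ?_ _
    have key : ∀ n, ∑ i ∈ Finset.Icc 1 m, (δ : ℝ≥0∞) * μ n {y | (i : ℝ≥0) * δ < g y} ≤ q n := by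
      intro n
      refine le_trans ?_ (stair_le_lintegral (μ n) g δ m)
      refine Finset.sum_le_sum fun i _ =>
        mul_le_mul_right (measure_mono (Set.setOf_subset_setOf.mpr fun y hy => le_of_lt hy)) _
    refine le_of_tendsto_of_tendsto' (tendsto_finset_sum _ fun i _ =>
      ENNReal.Tendsto.const_mul (hLim _) (Or.inr ENNReal.coe_ne_top)) (hLim q) key

end KBAux


open Filter Topology KBAux in
/-- If a Feller Markov transition kernel on a complete separable metric space admits a
Lyapunov function, then it admits an invariant probability measure. -/
theorem feller_lyapunov_has_invariant_measure
    {X : Type*} [MetricSpace X] [CompleteSpace X] [TopologicalSpace.SeparableSpace X]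
    [MeasurableSpace X] [BorelSpace X]
    (P : Kernel X X) [IsMarkovKernel P]
    (hFeller : ∀ f : X → ℝ, Continuous f → (∃ M : ℝ, ∀ x, |f x| ≤ M) →
      Continuous (fun x => ∫ y, f y ∂(P x)))
    (V : X → ℝ≥0∞) (hVmeas : Measurable V)
    (hVfin : ∃ x, V x < ⊤)
    (hVcompact : ∀ c : ℝ≥0, IsCompact {x | V x ≤ (c : ℝ≥0∞)})
    (γ C : ℝ≥0) (hγ : γ < 1)
    (hdrift : ∀ x, V x < ⊤ → ∫⁻ y, V y ∂(P x) ≤ (γ : ℝ≥0∞) * V x + C) :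
    ∃ π : Measure X, IsProbabilityMeasure π ∧
      ∀ A : Set X, MeasurableSet A → π A = ∫⁻ x, P x A ∂π := by
  classical
  obtain ⟨x₀, hx₀⟩ := hVfin
  -- the iterates of the kernel starting at x₀
  set ν : ℕ → Measure X := fun k => Nat.rec (Measure.dirac x₀) (fun _ m => m.bind P) k with hνdef
  have hν0 : ν 0 = Measure.dirac x₀ := rfl
  have hνs : ∀ k, ν (k + 1) = (ν k).bind (fun x => P x) := fun k => rfl
  have hbind_univ : ∀ m : Measure X, IsProbabilityMeasure m →
      IsProbabilityMeasure (m.bind (fun x => P x)) := by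
    intro m hm
    constructor
    rw [Measure.bind_apply MeasurableSet.univ P.measurable.aemeasurable]
    simp [measure_univ]
  haveI hνprob : ∀ k, IsProbabilityMeasure (ν k) := by
    intro k
    induction k with
    | zero => rw [hν0]; infer_instance
    | succ k ih => rw [hνs]; exact hbind_univ _ ih
  -- the uniform drift bound
  set B : ℝ≥0∞ := V x₀ + (C / (1 - γ) : ℝ≥0) with hBdef
  have hB_lt : B < ⊤ := by
    rw [hBdef]
    exact ENNReal.add_lt_top.2 ⟨hx₀, ENNReal.coe_lt_top⟩
  have harith : (γ : ℝ≥0∞) * (C / (1 - γ) : ℝ≥0) + C = ((C / (1 - γ) : ℝ≥0) : ℝ≥0∞) := by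
    have h1 : γ * (C / (1 - γ)) + C = C / (1 - γ) := by
      have h1γ : (1 : ℝ≥0) - γ ≠ 0 := (tsub_pos_of_lt hγ).ne'
      have hd : C / (1 - γ) * (1 - γ) = C := div_mul_cancel₀ _ h1γ
      calc γ * (C / (1 - γ)) + C = γ * (C / (1 - γ)) + C / (1 - γ) * (1 - γ) := by rw [hd]
      _ = C / (1 - γ) * (γ + (1 - γ)) := by ring
      _ = C / (1 - γ) := by rw [add_tsub_cancel_of_le hγ.le, mul_one]
    calc (γ : ℝ≥0∞) * (C / (1 - γ) : ℝ≥0) + C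
        = ((γ * (C / (1 - γ)) + C : ℝ≥0) : ℝ≥0∞) := by push_cast; ring
    _ = ((C / (1 - γ) : ℝ≥0) : ℝ≥0∞) := by rw [h1]
  have hdriftB : ∀ k, ∫⁻ x, V x ∂(ν k) ≤ B := by
    intro k
    induction k with
    | zero =>
      rw [hν0, lintegral_dirac' x₀ hVmeas]
      exact le_add_right le_rfl
    | succ k ih =>
      rw [hνs, Measure.lintegral_bind P.measurable.aemeasurable hVmeas.aemeasurable]
      have hae : ∀ᵐ x ∂(ν k), V x < ⊤ := ae_lt_top hVmeas (ih.trans_lt hB_lt).ne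
      calc ∫⁻ x, ∫⁻ y, V y ∂(P x) ∂(ν k)
          ≤ ∫⁻ x, ((γ : ℝ≥0∞) * V x + C) ∂(ν k) :=
            lintegral_mono_ae (hae.mono fun x hx => hdrift x hx)
      _ = (γ : ℝ≥0∞) * ∫⁻ x, V x ∂(ν k) + C := by
            rw [lintegral_add_right _ measurable_const, lintegral_const_mul _ hVmeas,
              lintegral_const, measure_univ, mul_one]
      _ ≤ (γ : ℝ≥0∞) * B + C := by
            exact add_le_add_left (mul_le_mul_right ih _) _
      _ ≤ B := by
            rw [hBdef, mul_add, add_assoc, harith]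
            exact add_le_add_left (mul_le_of_le_one_left (zero_le) (by exact_mod_cast hγ.le)) _
  -- Cesàro averages
  set μ : ℕ → Measure X :=
    fun n => ((n : ℝ≥0∞) + 1)⁻¹ • ∑ k ∈ Finset.range (n + 1), ν k with hμdef
  have hn1ne : ∀ n : ℕ, ((n : ℝ≥0∞) + 1) ≠ 0 :=
    fun n => (lt_of_lt_of_le one_pos le_add_self).ne'
  have hn1ne' : ∀ n : ℕ, ((n : ℝ≥0∞) + 1) ≠ ⊤ :=
    fun n => ENNReal.add_ne_top.2 ⟨ENNReal.natCast_ne_top n, ENNReal.one_ne_top⟩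
  have hμlint : ∀ (n : ℕ) (f : X → ℝ≥0∞),
      ∫⁻ x, f x ∂(μ n) = ((n : ℝ≥0∞) + 1)⁻¹ * ∑ k ∈ Finset.range (n + 1), ∫⁻ x, f x ∂(ν k) := by
    intro n f
    rw [hμdef]
    simp only [lintegral_smul_measure, lintegral_finset_sum_measure, smul_eq_mul]
  haveI hμprob : ∀ n, IsProbabilityMeasure (μ n) := by
    intro n
    constructor
    rw [← lintegral_one, hμlint]
    have hsum : ∑ k ∈ Finset.range (n + 1), ∫⁻ (_ : X), (1 : ℝ≥0∞) ∂(ν k)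
        = ((n : ℝ≥0∞) + 1) := by
      simp only [lintegral_one, measure_univ, Finset.sum_const, Finset.card_range,
        nsmul_eq_mul, mul_one]
      push_cast
      ring
    rw [hsum]
    exact ENNReal.inv_mul_cancel (hn1ne n) (hn1ne' n)
  have hμV : ∀ n, ∫⁻ x, V x ∂(μ n) ≤ B := by
    intro n
    rw [hμlint]
    calc ((n : ℝ≥0∞) + 1)⁻¹ * ∑ k ∈ Finset.range (n + 1), ∫⁻ x, V x ∂(ν k)
        ≤ ((n : ℝ≥0∞) + 1)⁻¹ * (((n + 1 : ℕ) : ℝ≥0∞) * B) := by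
          refine mul_le_mul_right ?_ _
          refine (Finset.sum_le_card_nsmul _ _ B fun k _ => hdriftB k).trans (le_of_eq ?_)
          rw [Finset.card_range, nsmul_eq_mul]
    _ = B := by
          rw [show (((n + 1 : ℕ) : ℝ≥0∞)) = ((n : ℝ≥0∞) + 1) by push_cast; ring,
            ← mul_assoc, ENNReal.inv_mul_cancel (hn1ne n) (hn1ne' n), one_mul]
  -- tightness
  have htight : ∀ ε : ℝ≥0, 0 < ε → ∃ K : Set X, IsCompact K ∧ ∀ n, μ n Kᶜ ≤ (ε : ℝ≥0∞) := by
    intro ε hε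
    have hεne : (ε : ℝ≥0∞) ≠ 0 := by exact_mod_cast hε.ne'
    have hBε_lt : B / (ε : ℝ≥0∞) < ⊤ := ENNReal.div_lt_top hB_lt.ne hεne
    set c : ℝ≥0 := (B / (ε : ℝ≥0∞)).toNNReal + 1 with hcdef
    have hcne : (c : ℝ≥0∞) ≠ 0 := by
      simp [hcdef]
    have hlt : B / (ε : ℝ≥0∞) < (c : ℝ≥0∞) := by
      rw [← ENNReal.coe_toNNReal hBε_lt.ne, hcdef]
      exact_mod_cast lt_add_one _
    have hBc : B ≤ (c : ℝ≥0∞) * (ε : ℝ≥0∞) := by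
      conv_lhs => rw [← ENNReal.div_mul_cancel hεne ENNReal.coe_ne_top (b := B)]
      exact mul_le_mul_left hlt.le _
    refine ⟨{x | V x ≤ (c : ℝ≥0∞)}, hVcompact c, fun n => ?_⟩
    have hsub : {x | V x ≤ (c : ℝ≥0∞)}ᶜ ⊆ {x | (c : ℝ≥0∞) ≤ V x} := by
      intro x hx
      simp only [Set.mem_compl_iff, Set.mem_setOf_eq, not_le] at hx
      exact hx.le
    calc μ n {x | V x ≤ (c : ℝ≥0∞)}ᶜ ≤ μ n {x | (c : ℝ≥0∞) ≤ V x} := measure_mono hsub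
    _ ≤ (∫⁻ x, V x ∂(μ n)) / (c : ℝ≥0∞) :=
        meas_ge_le_lintegral_div hVmeas.aemeasurable hcne ENNReal.coe_ne_top
    _ ≤ B / (c : ℝ≥0∞) := by gcongr; exact hμV n
    _ ≤ (ε : ℝ≥0∞) := ENNReal.div_le_of_le_mul (hBc.trans (le_of_eq (mul_comm _ _)))
  -- the limit measure
  set 𝒰 : Ultrafilter ℕ := Ultrafilter.of atTop with h𝒰def
  have h𝒰le : (𝒰 : Filter ℕ) ≤ atTop := Ultrafilter.of_le _
  obtain ⟨π, hπprob, hπtendsto⟩ := exists_limit_measure μ hμprob 𝒰 htight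
  haveI := hπprob
  -- invariance
  have hkey : π.bind (fun x => P x) = π := by
    haveI : IsProbabilityMeasure (π.bind (fun x => P x)) := hbind_univ π hπprob
    refine ext_of_forall_lintegral_eq_of_IsFiniteMeasure fun g => ?_
    -- the "Feller image" of g as a bounded continuous function
    set I : X → ℝ := fun x => ∫ y, (g y : ℝ) ∂(P x) with hIdef
    have hgcont : Continuous fun y : X => (g y : ℝ) := NNReal.continuous_coe.comp g.continuous
    have hgbd : ∀ y, |(g y : ℝ)| ≤ ((nndist 0 g : ℝ≥0) : ℝ) := by
      intro y
      rw [abs_of_nonneg (g y).coe_nonneg]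
      exact_mod_cast g.apply_le_nndist_zero y
    have hIcont : Continuous I := hFeller _ hgcont ⟨_, hgbd⟩
    have hInn : ∀ x, 0 ≤ I x := fun x => integral_nonneg fun y => (g y).coe_nonneg
    have hkey2 : ∀ x, ∫⁻ y, (g y : ℝ≥0∞) ∂(P x) = ENNReal.ofReal (I x) := by
      intro x
      haveI : IsProbabilityMeasure (P x) := IsMarkovKernel.isProbabilityMeasure x
      have h := BoundedContinuousFunction.toReal_lintegral_coe_eq_integral g (P x)
      rw [show I x = ∫ y, (g y : ℝ) ∂(P x) from rfl, ← h,
        ENNReal.ofReal_toReal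
          (BoundedContinuousFunction.lintegral_lt_top_of_nnreal (P x) g).ne]
    have hIbd : ∀ x, I x ≤ ((nndist 0 g : ℝ≥0) : ℝ) := by
      intro x
      haveI : IsProbabilityMeasure (P x) := IsMarkovKernel.isProbabilityMeasure x
      have h1 : ∫⁻ y, (g y : ℝ≥0∞) ∂(P x) ≤ ((nndist 0 g : ℝ≥0) : ℝ≥0∞) := by
        refine (BoundedContinuousFunction.lintegral_le_edist_mul g (μ := P x)).trans ?_
        rw [measure_univ, mul_one, edist_nndist]
      have h2 := ENNReal.toReal_mono ENNReal.coe_ne_top h1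
      rw [BoundedContinuousFunction.toReal_lintegral_coe_eq_integral g (P x),
        ENNReal.coe_toReal] at h2
      exact h2
    set Pg : X →ᵇ ℝ≥0 :=
      { toFun := fun x => Real.toNNReal (I x)
        continuous_toFun := continuous_real_toNNReal.comp hIcont
        map_bounded' := by
          refine ⟨((nndist 0 g : ℝ≥0) : ℝ), fun x y => ?_⟩
          rw [NNReal.dist_eq]
          simp only [Real.coe_toNNReal _ (hInn x), Real.coe_toNNReal _ (hInn y)]
          rw [← Real.dist_eq]
          simpa using Real.dist_le_of_mem_Icc ⟨hInn x, hIbd x⟩ ⟨hInn y, hIbd y⟩ } with hPgdef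
    have hPg_coe : ∀ x, ((Pg x : ℝ≥0) : ℝ≥0∞) = ∫⁻ y, (g y : ℝ≥0∞) ∂(P x) := by
      intro x
      rw [hkey2 x]
      rfl
    -- Cesàro identity
    set b : ℕ → ℝ≥0∞ := fun k => ∫⁻ y, (g y : ℝ≥0∞) ∂(ν k) with hbdef
    have hbbd : ∀ k, b k ≤ ((nndist 0 g : ℝ≥0) : ℝ≥0∞) := by
      intro k
      haveI := hνprob k
      refine (BoundedContinuousFunction.lintegral_le_edist_mul g (μ := ν k)).trans ?_
      rw [measure_univ, mul_one, edist_nndist]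
    have hPgν : ∀ k, ∫⁻ x, ((Pg x : ℝ≥0) : ℝ≥0∞) ∂(ν k) = b (k + 1) := by
      intro k
      show _ = ∫⁻ y, (g y : ℝ≥0∞) ∂(ν (k + 1))
      rw [hνs k, Measure.lintegral_bind P.measurable.aemeasurable g.measurable_coe_ennreal_comp.aemeasurable]
      exact lintegral_congr fun x => hPg_coe x
    have hPgμ : ∀ n, ∫⁻ x, ((Pg x : ℝ≥0) : ℝ≥0∞) ∂(μ n)
        = ((n : ℝ≥0∞) + 1)⁻¹ * ∑ k ∈ Finset.range (n + 1), b (k + 1) := by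
      intro n
      rw [hμlint]
      exact congrArg _ (Finset.sum_congr rfl fun k _ => hPgν k)
    have hgμ : ∀ n, ∫⁻ x, (g x : ℝ≥0∞) ∂(μ n)
        = ((n : ℝ≥0∞) + 1)⁻¹ * ∑ k ∈ Finset.range (n + 1), b k := fun n => hμlint n _
    set M : ℝ≥0∞ := ((nndist 0 g : ℝ≥0) : ℝ≥0∞) with hMdef
    have hsum1 : ∀ n : ℕ, ∑ k ∈ Finset.range (n + 1), b (k + 1)
        ≤ (∑ k ∈ Finset.range (n + 1), b k) + M := by
      intro n
      have h1 : ∑ k ∈ Finset.range (n + 1 + 1), b k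
          = (∑ k ∈ Finset.range (n + 1), b (k + 1)) + b 0 := Finset.sum_range_succ' b (n + 1)
      have h2 : ∑ k ∈ Finset.range (n + 1 + 1), b k
          = (∑ k ∈ Finset.range (n + 1), b k) + b (n + 1) := Finset.sum_range_succ b (n + 1)
      calc ∑ k ∈ Finset.range (n + 1), b (k + 1) ≤ ∑ k ∈ Finset.range (n + 1 + 1), b k := by
            rw [h1]; exact le_add_right le_rfl
      _ ≤ (∑ k ∈ Finset.range (n + 1), b k) + M := by
            rw [h2]; exact add_le_add le_rfl (hbbd (n + 1))
    have hsum2 : ∀ n : ℕ, ∑ k ∈ Finset.range (n + 1), b k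
        ≤ (∑ k ∈ Finset.range (n + 1), b (k + 1)) + M := by
      intro n
      have h1 : ∑ k ∈ Finset.range (n + 1 + 1), b k
          = (∑ k ∈ Finset.range (n + 1), b (k + 1)) + b 0 := Finset.sum_range_succ' b (n + 1)
      calc ∑ k ∈ Finset.range (n + 1), b k ≤ ∑ k ∈ Finset.range (n + 1 + 1), b k := by
            rw [Finset.sum_range_succ b (n + 1)]; exact le_add_right le_rfl
      _ ≤ (∑ k ∈ Finset.range (n + 1), b (k + 1)) + M := by
            rw [h1]; exact add_le_add le_rfl (hbbd 0)
    set e : ℕ → ℝ≥0∞ := fun n => ((n : ℝ≥0∞) + 1)⁻¹ * M with hedef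
    have hineq1 : ∀ n, ∫⁻ x, ((Pg x : ℝ≥0) : ℝ≥0∞) ∂(μ n) ≤ ∫⁻ x, (g x : ℝ≥0∞) ∂(μ n) + e n := by
      intro n
      rw [hPgμ n, hgμ n, hedef]
      calc ((n : ℝ≥0∞) + 1)⁻¹ * ∑ k ∈ Finset.range (n + 1), b (k + 1)
          ≤ ((n : ℝ≥0∞) + 1)⁻¹ * ((∑ k ∈ Finset.range (n + 1), b k) + M) :=
            mul_le_mul_right (hsum1 n) _
      _ = _ := by rw [mul_add]
    have hineq2 : ∀ n, ∫⁻ x, (g x : ℝ≥0∞) ∂(μ n) ≤ ∫⁻ x, ((Pg x : ℝ≥0) : ℝ≥0∞) ∂(μ n) + e n := by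
      intro n
      rw [hPgμ n, hgμ n, hedef]
      calc ((n : ℝ≥0∞) + 1)⁻¹ * ∑ k ∈ Finset.range (n + 1), b k
          ≤ ((n : ℝ≥0∞) + 1)⁻¹ * ((∑ k ∈ Finset.range (n + 1), b (k + 1)) + M) :=
            mul_le_mul_right (hsum2 n) _
      _ = _ := by rw [mul_add]
    have he : Tendsto e atTop (𝓝 0) := by
      have h1 : Tendsto (fun n : ℕ => ((n : ℝ≥0∞) + 1)⁻¹) atTop (𝓝 0) := by
        have := ENNReal.tendsto_inv_nat_nhds_zero.comp (tendsto_add_atTop_nat 1)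
        refine this.congr fun n => ?_
        simp only [Function.comp_apply]
        norm_cast
      have h2 := ENNReal.Tendsto.mul_const h1
        (Or.inr (show M ≠ ⊤ by rw [hMdef]; exact ENNReal.coe_ne_top))
      rwa [zero_mul] at h2
    have he𝒰 : Tendsto e ↑𝒰 (𝓝 0) := he.mono_left h𝒰le
    have t1 := hπtendsto Pg
    have t2 := hπtendsto g
    have hle1 : ∫⁻ x, ((Pg x : ℝ≥0) : ℝ≥0∞) ∂π ≤ ∫⁻ x, (g x : ℝ≥0∞) ∂π := by
      have := le_of_tendsto_of_tendsto' t1 (t2.add he𝒰) hineq1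
      rwa [add_zero] at this
    have hle2 : ∫⁻ x, (g x : ℝ≥0∞) ∂π ≤ ∫⁻ x, ((Pg x : ℝ≥0) : ℝ≥0∞) ∂π := by
      have := le_of_tendsto_of_tendsto' t2 (t1.add he𝒰) hineq2
      rwa [add_zero] at this
    calc ∫⁻ x, (g x : ℝ≥0∞) ∂(π.bind (fun x => P x))
        = ∫⁻ x, ∫⁻ y, (g y : ℝ≥0∞) ∂(P x) ∂π :=
          Measure.lintegral_bind P.measurable.aemeasurable g.measurable_coe_ennreal_comp.aemeasurable
    _ = ∫⁻ x, ((Pg x : ℝ≥0) : ℝ≥0∞) ∂π := (lintegral_congr fun x => (hPg_coe x)).symm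
    _ = ∫⁻ x, (g x : ℝ≥0∞) ∂π := le_antisymm hle1 hle2
  refine ⟨π, hπprob, fun A hA => ?_⟩
  conv_lhs => rw [← hkey]
  exact Measure.bind_apply hA P.measurable.aemeasurable
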